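/- Let p, q : ℕ. On ℂ^p × ℂ^q define the hermitian form h((x,y),(x',y')) = ∑_i conj(x i) * x' i − ∑_j conj(y j) * y' j. Let Z₁ ∈ Matrix (Fin q) (Fin p) ℂ with 1 − Z₁ᴴ * Z₁ positive definite, and let W = {(u, Z₁ *ᵥ u) | u ∈ (Fin p → ℂ)}. Then: (a) h(v,v) > 0 for every nonzero v ∈ W; (b) the h-orthogonal complement {v' | ∀ v ∈ W, h(v, v') = 0} equals {(Z₁ᴴ *ᵥ w, w) | w ∈ (Fin q → ℂ)}; (c) 1 − Z₁ * Z₁ᴴ is positive definite, so h(v,v) < 0 for every nonzero v in this orthogonal complement. -/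

import Mathlib

open Matrix
open scoped ComplexOrder

private lemma dot_self_eq {n : ℕ} (x : Fin n → ℂ) :
    dotProduct (star x) x = (((‖(WithLp.equiv 2 ((Fin n) → ℂ)).symm x‖ : ℝ) : ℂ))^2 := by
  have := inner_self_eq_norm_sq_to_K (𝕜 := ℂ) ((WithLp.equiv 2 ((Fin n) → ℂ)).symm x)
  rw [dotProduct_comm]; exact this

private lemma dot_cs {n : ℕ} (x y : Fin n → ℂ) :
    ‖dotProduct (star x) y‖ ≤ ‖(WithLp.equiv 2 ((Fin n) → ℂ)).symm x‖ *
      ‖(WithLp.equiv 2 ((Fin n) → ℂ)).symm y‖ := by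
  have := norm_inner_le_norm (𝕜 := ℂ) ((WithLp.equiv 2 ((Fin n) → ℂ)).symm x)
    ((WithLp.equiv 2 ((Fin n) → ℂ)).symm y)
  rw [dotProduct_comm]; exact this

private lemma qform_eq {n m : ℕ} (M : Matrix (Fin m) (Fin n) ℂ) (x : Fin n → ℂ) :
    dotProduct (star x) ((1 - Mᴴ * M) *ᵥ x)
      = dotProduct (star x) x - dotProduct (star (M *ᵥ x)) (M *ᵥ x) := by
  rw [sub_mulVec, one_mulVec, dotProduct_sub, ← mulVec_mulVec, dotProduct_mulVec,
    ← star_mulVec]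

private lemma norm_pos_of_ne {n : ℕ} {x : Fin n → ℂ} (hx : x ≠ 0) :
    0 < ‖(WithLp.equiv 2 ((Fin n) → ℂ)).symm x‖ := by
  rw [norm_pos_iff]; simpa using hx

private lemma complex_sq_sub {x y : ℝ} :
    0 < ((y : ℂ))^2 - ((x : ℂ))^2 ↔ x^2 < y^2 := by
  rw [show ((y:ℂ))^2 - ((x:ℂ))^2 = ((y^2 - x^2 : ℝ) : ℂ) by push_cast; ring,
    Complex.zero_lt_real]
  constructor <;> intro <;> linarith

private lemma posdef_flip {q p : ℕ} (Z₁ : Matrix (Fin q) (Fin p) ℂ)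
    (hZ : (1 - Z₁ᴴ * Z₁).PosDef) : (1 - Z₁ * Z₁ᴴ).PosDef := by
  refine PosDef.of_dotProduct_mulVec_pos ?_ ?_
  · exact (isHermitian_one).sub (isHermitian_mul_conjTranspose_self Z₁)
  intro w hw
  have key : (1 : Matrix (Fin q) (Fin q) ℂ) - Z₁ * Z₁ᴴ = 1 - (Z₁ᴴ)ᴴ * Z₁ᴴ := by
    rw [conjTranspose_conjTranspose]
  rw [key, qform_eq, dot_self_eq, dot_self_eq, complex_sq_sub]
  set a := ‖(WithLp.equiv 2 ((Fin q) → ℂ)).symm w‖ with ha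
  set u := Z₁ᴴ *ᵥ w with hu
  set b := ‖(WithLp.equiv 2 ((Fin p) → ℂ)).symm u‖ with hb
  have ha0 : 0 < a := norm_pos_of_ne hw
  by_cases hu0 : u = 0
  · have hb' : b = 0 := by rw [hb, hu0]; simp
    nlinarith
  have hb0 : 0 < b := norm_pos_of_ne hu0
  set c := ‖(WithLp.equiv 2 ((Fin q) → ℂ)).symm (Z₁ *ᵥ u)‖ with hc
  have h1 : c^2 < b^2 := by
    have h2 := hZ.dotProduct_mulVec_pos hu0
    rw [qform_eq, dot_self_eq, dot_self_eq, complex_sq_sub] at h2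
    exact h2
  have hcb : c < b := by
    nlinarith [norm_nonneg ((WithLp.equiv 2 ((Fin q) → ℂ)).symm (Z₁ *ᵥ u))]
  have hdot : dotProduct (star w) (Z₁ *ᵥ u) = dotProduct (star u) u := by
    rw [dotProduct_mulVec,
      show star w ᵥ* Z₁ = star u by rw [hu, star_mulVec, conjTranspose_conjTranspose]]
  have hcs : b^2 ≤ a * c := by
    have h3 := dot_cs w (Z₁ *ᵥ u)
    rw [hdot, dot_self_eq] at h3
    calc b^2 = ‖((b : ℂ))^2‖ := by
          rw [← Complex.ofReal_pow, Complex.norm_real,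
            Real.norm_of_nonneg (by positivity)]
      _ ≤ a * c := h3
  nlinarith

/-- `h`-orthocomplementation interchanges the positive and negative bounded symmetric
domains: if `1 − Z₁ᴴ Z₁` is positive definite then the graph `W = {(u, Z₁ u)}` is
`h`-positive definite, its `h`-orthocomplement is the graph `{(Z₁ᴴ w, w)}`, and
`1 − Z₁ Z₁ᴴ` is positive definite, so the orthocomplement is `h`-negative definite. -/
theorem stmt_13 (p q : ℕ)
    (h : ((Fin p → ℂ) × (Fin q → ℂ)) → ((Fin p → ℂ) × (Fin q → ℂ)) → ℂ)
    (hh : ∀ v v', h v v' =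
      (∑ i, starRingEnd ℂ (v.1 i) * v'.1 i) - ∑ j, starRingEnd ℂ (v.2 j) * v'.2 j)
    (Z₁ : Matrix (Fin q) (Fin p) ℂ)
    (hZ : (1 - Z₁.conjTranspose * Z₁).PosDef) :
    (∀ v ∈ {v : (Fin p → ℂ) × (Fin q → ℂ) | ∃ u, v = (u, Z₁ *ᵥ u)},
        v ≠ 0 → h v v > 0) ∧
    {v' | ∀ v ∈ {v : (Fin p → ℂ) × (Fin q → ℂ) | ∃ u, v = (u, Z₁ *ᵥ u)}, h v v' = 0} =
      {v' : (Fin p → ℂ) × (Fin q → ℂ) | ∃ w, v' = (Z₁.conjTranspose *ᵥ w, w)} ∧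
    ((1 - Z₁ * Z₁.conjTranspose).PosDef ∧
      ∀ v' ∈ {v' : (Fin p → ℂ) × (Fin q → ℂ) | ∃ w, v' = (Z₁.conjTranspose *ᵥ w, w)},
        v' ≠ 0 → h v' v' < 0) := by
  have hh' : ∀ v v' : (Fin p → ℂ) × (Fin q → ℂ),
      h v v' = dotProduct (star v.1) v'.1 - dotProduct (star v.2) v'.2 := by
    intro v v'; rw [hh]; simp only [dotProduct, Pi.star_apply, starRingEnd_apply]
  refine ⟨?_, ?_, posdef_flip Z₁ hZ, ?_⟩
  · rintro v ⟨u, rfl⟩ hv0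
    have hu : u ≠ 0 := by
      rintro rfl; exact hv0 (by simp [Prod.ext_iff])
    rw [hh']
    have h2 := hZ.dotProduct_mulVec_pos hu
    rw [qform_eq] at h2
    exact h2
  · ext v'
    constructor
    · intro hv'
      have hcomp : ∀ u : Fin p → ℂ,
          h (u, Z₁ *ᵥ u) v' = dotProduct (star u) (v'.1 - Z₁ᴴ *ᵥ v'.2) := by
        intro u
        rw [hh', dotProduct_sub]
        simp only [star_mulVec, ← dotProduct_mulVec]
      set d := v'.1 - Z₁ᴴ *ᵥ v'.2 with hd
      have h0 : dotProduct (star d) d = 0 := by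
        rw [← hcomp d]; exact hv' (d, Z₁ *ᵥ d) ⟨d, rfl⟩
      have hd0 : d = 0 := dotProduct_star_self_eq_zero.mp h0
      refine ⟨v'.2, ?_⟩
      have : v'.1 = Z₁ᴴ *ᵥ v'.2 := by
        have := sub_eq_zero.mp hd0; exact this
      exact Prod.ext this rfl
    · rintro ⟨w, rfl⟩ v ⟨u, rfl⟩
      rw [hh']
      simp only [star_mulVec, ← dotProduct_mulVec]
      exact sub_self _
  · rintro v' ⟨w, rfl⟩ hne
    have hw : w ≠ 0 := by
      rintro rfl; exact hne (by simp [Prod.ext_iff])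
    have hpos := (posdef_flip Z₁ hZ).dotProduct_mulVec_pos hw
    rw [show (1 : Matrix (Fin q) (Fin q) ℂ) - Z₁ * Z₁ᴴ = 1 - (Z₁ᴴ)ᴴ * Z₁ᴴ by
      rw [conjTranspose_conjTranspose], qform_eq] at hpos
    rw [hh']
    simpa using sub_neg.mpr (sub_pos.mp hpos)
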